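/- arXiv:1911.10523 — 2 statements merged into one kernel-verified Lean document; each statement's English description precedes it below -/
import Mathlib

section
/- Let ℓ > 0, let Q^ℓ = [0, ℓ]², and let ρ : Q^ℓ → ℝ be Lipschitz continuous with Lipschitz constant L and satisfying ρ(x) ≥ a > 0 for all x ∈ Q^ℓ. Define r(x) = ρ(x) / ∫_{Q^ℓ} ρ and r₂(x₂) = ∫_0^ℓ r(x₁', x₂) dx₁'. Then for all x ∈ Q^ℓ, |r(x) − ℓ^{-2}| ≤ √2 · L/(a ℓ), and for all x₂ ∈ [0, ℓ], |r₂(x₂) − ℓ^{-1}| ≤ √2 · L/a. -/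
open MeasureTheory Filter
open scoped ENNReal NNReal Topology

noncomputable section

/-- The plane, with the Euclidean norm. -/
abbrev E2 : Type := EuclideanSpace ℝ (Fin 2)

/-- The point of `ℝ²` with coordinates `(s, t)`. -/
def mk2 (s t : ℝ) : E2 := (WithLp.equiv 2 (Fin 2 → ℝ)).symm ![s, t]

/-- The square `Q^ℓ = [0,ℓ]²`. -/
def sqSet (ℓ : ℝ) : Set E2 := {x | ∀ i, x i ∈ Set.Icc (0 : ℝ) ℓ}

lemma sq_meas (ℓ : ℝ) : MeasurableSet (sqSet ℓ) := by
  have : sqSet ℓ = ⋂ i, (fun x : E2 => x i) ⁻¹' Set.Icc (0:ℝ) ℓ := by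
    ext x; simp [sqSet]
  rw [this]
  exact MeasurableSet.iInter fun i =>
    ((continuous_apply i).comp (PiLp.continuous_ofLp 2 _)).measurable measurableSet_Icc

lemma sq_preimage (ℓ : ℝ) :
    (MeasurableEquiv.toLp 2 (Fin 2 → ℝ)).symm.symm ⁻¹' sqSet ℓ
      = Set.univ.pi (fun _ : Fin 2 => Set.Icc (0:ℝ) ℓ) := by
  ext x; simp [sqSet, Set.mem_pi, MeasurableEquiv.coe_toLp]
  simp [Pi.le_def, forall_and]
  tauto

lemma vol_sq (ℓ : ℝ) (hℓ : 0 ≤ ℓ) : volume (sqSet ℓ) = ENNReal.ofReal (ℓ^2) := by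
  have h := (EuclideanSpace.volume_preserving_symm_measurableEquiv_toLp (Fin 2)).symm
  rw [← h.measure_preimage (sq_meas ℓ).nullMeasurableSet, sq_preimage, volume_pi_pi]
  simp [Real.volume_Icc, hℓ, sq, ENNReal.ofReal_mul hℓ]

lemma sq_dist (ℓ : ℝ) (hℓ : 0 ≤ ℓ) {x y : E2} (hx : x ∈ sqSet ℓ) (hy : y ∈ sqSet ℓ) :
    dist x y ≤ Real.sqrt 2 * ℓ := by
  rw [EuclideanSpace.dist_eq]
  have key : ∑ i, dist (x i) (y i) ^ 2 ≤ 2 * ℓ ^ 2 := by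
    have : ∀ i : Fin 2, dist (x i) (y i) ^ 2 ≤ ℓ ^ 2 := by
      intro i
      have h1 := hx i; have h2 := hy i
      have : dist (x i) (y i) ≤ ℓ := by
        have := Real.dist_le_of_mem_Icc (x := x i) (y := y i) (by simpa using h1)
          (by simpa using h2)
        simpa using this
      exact pow_le_pow_left₀ dist_nonneg this 2
    calc ∑ i, dist (x i) (y i) ^ 2 ≤ ∑ _i : Fin 2, ℓ ^ 2 := Finset.sum_le_sum fun i _ => this i
    _ = 2 * ℓ ^ 2 := by simp [two_mul]
  calc Real.sqrt (∑ i, dist (x i) (y i) ^ 2) ≤ Real.sqrt (2 * ℓ ^ 2) := Real.sqrt_le_sqrt key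
  _ = Real.sqrt 2 * ℓ := by
      rw [Real.sqrt_mul (by norm_num), Real.sqrt_sq hℓ]

lemma sq_compact (ℓ : ℝ) : IsCompact (sqSet ℓ) := by
  rcases le_or_gt 0 ℓ with hℓ | hℓ
  · apply Metric.isCompact_of_isClosed_isBounded
    · have : sqSet ℓ = ⋂ i, (fun x : E2 => x i) ⁻¹' Set.Icc (0:ℝ) ℓ := by ext x; simp [sqSet]
      rw [this]
      exact isClosed_iInter fun i => isClosed_Icc.preimage ((continuous_apply i).comp (PiLp.continuous_ofLp 2 _))
    · rw [Metric.isBounded_iff]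
      exact ⟨Real.sqrt 2 * ℓ, fun x hx y hy => sq_dist ℓ hℓ hx hy⟩
  · have : sqSet ℓ = ∅ := by
      ext x; simp only [sqSet, Set.mem_setOf_eq, Set.mem_empty_iff_false, iff_false]
      intro h
      have := h 0
      simp only [Set.mem_Icc] at this
      linarith [this.1, this.2]
    rw [this]; exact isCompact_empty

lemma cont_mk2 (t : ℝ) : Continuous fun s => mk2 s t := by
  have : (fun s => mk2 s t) =
      (PiLp.continuousLinearEquiv 2 ℝ (fun _ : Fin 2 => ℝ)).symm ∘ (fun s => ![s, t]) := rfl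
  rw [this]
  apply Continuous.comp (ContinuousLinearEquiv.continuous _)
  exact continuous_pi fun i => by
    fin_cases i
    · simpa using continuous_id'
    · simpa using continuous_const

/-- For an `L`-Lipschitz density `ρ ≥ a > 0` on `Q^ℓ = [0,ℓ]²`, the normalized
density `r = ρ/∫ρ` satisfies `|r(x) − ℓ⁻²| ≤ √2 L/(aℓ)`, and its first marginal
`r₂(x₂) = ∫_0^ℓ r(x₁', x₂) dx₁'` satisfies `|r₂(x₂) − ℓ⁻¹| ≤ √2 L/a`. -/
theorem normalized_density_estimates
    (ℓ : ℝ) (hℓ : 0 < ℓ) (ρ : E2 → ℝ) (L : ℝ≥0) (a : ℝ) (ha : 0 < a)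
    (hlip : LipschitzOnWith L ρ (sqSet ℓ))
    (hpos : ∀ x ∈ sqSet ℓ, a ≤ ρ x)
    (r : E2 → ℝ) (hr : r = fun x => ρ x / ∫ y in sqSet ℓ, ρ y)
    (r₂ : ℝ → ℝ)
    (hr₂ : r₂ = fun x₂ => ∫ x₁' in Set.Icc (0 : ℝ) ℓ, r (mk2 x₁' x₂)) :
    (∀ x ∈ sqSet ℓ, |r x - (ℓ ^ 2)⁻¹| ≤ Real.sqrt 2 * L / (a * ℓ)) ∧
    (∀ x₂ ∈ Set.Icc (0 : ℝ) ℓ, |r₂ x₂ - ℓ⁻¹| ≤ Real.sqrt 2 * L / a) := by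
  set I : ℝ := ∫ y in sqSet ℓ, ρ y with hI
  have hℓ0 : (0:ℝ) ≤ ℓ := hℓ.le
  have hm := sq_meas ℓ
  have hvol : (volume (sqSet ℓ)).toReal = ℓ ^ 2 := by
    rw [vol_sq ℓ hℓ0, ENNReal.toReal_ofReal (by positivity)]
  have hvolfin : volume (sqSet ℓ) < ⊤ := by
    rw [vol_sq ℓ hℓ0]; exact ENNReal.ofReal_lt_top
  have hint : IntegrableOn ρ (sqSet ℓ) :=
    hlip.continuousOn.integrableOn_compact (sq_compact ℓ)
  have hcint : ∀ c : ℝ, IntegrableOn (fun _ : E2 => c) (sqSet ℓ) := fun c =>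
    integrableOn_const hvolfin.ne
  have hIlow : a * ℓ ^ 2 ≤ I := by
    have := setIntegral_mono_on (hcint a) hint hm hpos
    rwa [setIntegral_const, measureReal_def, hvol, smul_eq_mul, mul_comm] at this
  have hIpos : 0 < I := lt_of_lt_of_le (by positivity) hIlow
  have claim1 : ∀ x ∈ sqSet ℓ, |r x - (ℓ ^ 2)⁻¹| ≤ Real.sqrt 2 * L / (a * ℓ) := by
    intro x hx
    have hdiff : ρ x * ℓ ^ 2 - I = ∫ y in sqSet ℓ, (ρ x - ρ y) := by
      rw [integral_sub (hcint (ρ x)) hint, setIntegral_const, measureReal_def, hvol, smul_eq_mul, mul_comm]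
    have hbound : |ρ x * ℓ ^ 2 - I| ≤ Real.sqrt 2 * L * ℓ * ℓ ^ 2 := by
      rw [hdiff, ← Real.norm_eq_abs]
      have h := norm_setIntegral_le_of_norm_le_const hvolfin
        (C := Real.sqrt 2 * L * ℓ)
        (fun y hy => by
          show ‖ρ x - ρ y‖ ≤ Real.sqrt 2 * L * ℓ
          rw [Real.norm_eq_abs, ← Real.dist_eq]
          calc dist (ρ x) (ρ y) ≤ L * dist x y := hlip.dist_le_mul x hx y hy
          _ ≤ L * (Real.sqrt 2 * ℓ) :=
              mul_le_mul_of_nonneg_left (sq_dist ℓ hℓ0 hx hy) (by positivity)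
          _ = Real.sqrt 2 * L * ℓ := by ring)
      rwa [measureReal_def, hvol] at h
    have heq : r x - (ℓ ^ 2)⁻¹ = (ρ x * ℓ ^ 2 - I) / (I * ℓ ^ 2) := by
      rw [hr]
      field_simp
    rw [heq, abs_div, abs_of_pos (show (0:ℝ) < I * ℓ ^ 2 by positivity)]
    have hd : a * ℓ ^ 2 * ℓ ^ 2 ≤ I * ℓ ^ 2 :=
      mul_le_mul_of_nonneg_right hIlow (by positivity)
    calc |ρ x * ℓ ^ 2 - I| / (I * ℓ ^ 2)
        ≤ (Real.sqrt 2 * L * ℓ * ℓ ^ 2) / (a * ℓ ^ 2 * ℓ ^ 2) :=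
          div_le_div₀ (by positivity) hbound (by positivity) hd
      _ = Real.sqrt 2 * L / (a * ℓ) := by field_simp
  refine ⟨claim1, ?_⟩
  intro x₂ hx₂
  have hmem : ∀ s ∈ Set.Icc (0:ℝ) ℓ, mk2 s x₂ ∈ sqSet ℓ := by
    intro s hs i
    fin_cases i
    · exact hs
    · exact hx₂
  have hcont : ContinuousOn (fun s => r (mk2 s x₂)) (Set.Icc (0:ℝ) ℓ) := by
    rw [hr]
    exact ((hlip.continuousOn.comp (cont_mk2 x₂).continuousOn hmem).div_const I)
  have hgint : IntegrableOn (fun s => r (mk2 s x₂)) (Set.Icc (0:ℝ) ℓ) :=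
    hcont.integrableOn_compact isCompact_Icc
  have hIccvol : (volume (Set.Icc (0:ℝ) ℓ)).toReal = ℓ := by
    rw [Real.volume_Icc]; simp [hℓ0]
  have hIccfin : volume (Set.Icc (0:ℝ) ℓ) < ⊤ := by
    rw [Real.volume_Icc]; exact ENNReal.ofReal_lt_top
  have hc2 : IntegrableOn (fun _ : ℝ => (ℓ ^ 2)⁻¹) (Set.Icc (0:ℝ) ℓ) :=
    integrableOn_const hIccfin.ne
  have hdiff : r₂ x₂ - ℓ⁻¹ = ∫ s in Set.Icc (0:ℝ) ℓ, (r (mk2 s x₂) - (ℓ ^ 2)⁻¹) := by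
    rw [integral_sub hgint hc2, setIntegral_const, measureReal_def, hIccvol, smul_eq_mul, hr₂]
    congr 1
    field_simp
  have : |∫ s in Set.Icc (0:ℝ) ℓ, (r (mk2 s x₂) - (ℓ ^ 2)⁻¹)|
      ≤ (Real.sqrt 2 * L / (a * ℓ)) * ℓ := by
    rw [← Real.norm_eq_abs]
    have := norm_setIntegral_le_of_norm_le_const hIccfin
      (fun s hs => by
        rw [Real.norm_eq_abs]
        exact claim1 _ (hmem s hs))
      (f := fun s => r (mk2 s x₂) - (ℓ ^ 2)⁻¹)
    rwa [measureReal_def, hIccvol] at this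
  rw [hdiff]
  calc |∫ s in Set.Icc (0:ℝ) ℓ, (r (mk2 s x₂) - (ℓ ^ 2)⁻¹)|
      ≤ (Real.sqrt 2 * L / (a * ℓ)) * ℓ := this
    _ = Real.sqrt 2 * L / a := by field_simp
end
end

section
/- Let ρ : Q → ℝ be a bounded, strictly positive probability density on the unit square Q = [0,1]² and let μ = ρ dx. Fix a positive integer m and partition Q into the m² closed squares Q_k of side 1/m of the regular grid; set p_k = ∫_{Q_k} ρ(x) dx > 0. Sample N points x_1,…,x_N independently with distribution μ, let R_k be the number of sampled points in Q_k, and let μ^m be the (random) measure on Q with density f^m(x) = Σ_k (R_k/(p_k N)) ρ(x) 1_{Q_k}(x). Then E_μ[ ∫_Q (f^m(x) − ρ(x))² dx ] ≤ ‖ρ‖_∞ · m² / N. -/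
open MeasureTheory Filter
open scoped ENNReal NNReal Topology Classical

noncomputable section

/-- The unit square `Q = [0,1]²`. -/
def unitSq : Set E2 := {x | ∀ i, x i ∈ Set.Icc (0 : ℝ) 1}

/-- The square of the regular `m × m` grid with index `k = (i, j)`:
points are assigned to a unique square via half-open intervals. -/
def gridSq (m : ℕ) (k : Fin m × Fin m) : Set E2 :=
  {x | x 0 ∈ Set.Ico ((k.1 : ℝ) / m) (((k.1 : ℝ) + 1) / m) ∧
       x 1 ∈ Set.Ico ((k.2 : ℝ) / m) (((k.2 : ℝ) + 1) / m)}


lemma measurableSet_unitSq : MeasurableSet unitSq := by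
  have : unitSq = ⋂ i, (fun x : E2 => x i) ⁻¹' Set.Icc 0 1 := by
    ext x; simp [unitSq]
  rw [this]
  exact MeasurableSet.iInter fun i => ((measurable_pi_apply i).comp (WithLp.measurable_ofLp 2 _)) measurableSet_Icc

lemma measurableSet_gridSq (m : ℕ) (k : Fin m × Fin m) : MeasurableSet (gridSq m k) := by
  have : gridSq m k = (fun x : E2 => x 0) ⁻¹' Set.Ico ((k.1 : ℝ) / m) (((k.1 : ℝ) + 1) / m)
      ∩ (fun x : E2 => x 1) ⁻¹' Set.Ico ((k.2 : ℝ) / m) (((k.2 : ℝ) + 1) / m) := rfl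
  rw [this]
  exact (((measurable_pi_apply 0).comp (WithLp.measurable_ofLp 2 _)) measurableSet_Ico).inter
    (((measurable_pi_apply 1).comp (WithLp.measurable_ofLp 2 _)) measurableSet_Ico)

lemma gridSq_subset (m : ℕ) (k : Fin m × Fin m) : gridSq m k ⊆ unitSq := by
  rintro x ⟨h0, h1⟩ i
  have hm' : (0:ℝ) < m := by
    have := k.1.pos
    exact_mod_cast Nat.pos_of_ne_zero (by rintro rfl; exact absurd k.1.2 (by omega))
  have key : ∀ (a : Fin m) (t : ℝ), t ∈ Set.Ico ((a : ℝ) / m) (((a : ℝ) + 1) / m) →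
      t ∈ Set.Icc (0:ℝ) 1 := by
    rintro a t ⟨ht1, ht2⟩
    constructor
    · exact le_trans (by positivity) ht1
    · have : ((a : ℝ) + 1) / m ≤ 1 := by
        rw [div_le_one hm']
        have : (a : ℕ) + 1 ≤ m := a.2
        exact_mod_cast this
      linarith
  fin_cases i
  · exact key k.1 (x 0) h0
  · exact key k.2 (x 1) h1

lemma fin_eq_of_mem_Ico (m : ℕ) (a b : Fin m) (t : ℝ)
    (ha : t ∈ Set.Ico ((a : ℝ) / m) (((a : ℝ) + 1) / m))
    (hb : t ∈ Set.Ico ((b : ℝ) / m) (((b : ℝ) + 1) / m)) : a = b := by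
  have hm' : (0:ℝ) < m := by
    exact_mod_cast Nat.pos_of_ne_zero (by rintro rfl; exact absurd a.2 (by omega))
  by_contra hne
  obtain ⟨ha1, ha2⟩ := ha
  obtain ⟨hb1, hb2⟩ := hb
  rcases lt_or_gt_of_ne (fun h : (a:ℕ) = (b:ℕ) => hne (Fin.ext h)) with h | h
  · have : ((a:ℝ) + 1) ≤ (b:ℝ) := by exact_mod_cast h
    have : ((a:ℝ) + 1) / m ≤ (b:ℝ) / m := by gcongr
    linarith
  · have : ((b:ℝ) + 1) ≤ (a:ℝ) := by exact_mod_cast h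
    have : ((b:ℝ) + 1) / m ≤ (a:ℝ) / m := by gcongr
    linarith

lemma gridSq_disjoint (m : ℕ) : Pairwise (Function.onFun Disjoint (gridSq m)) := by
  intro k k' hne
  rw [Function.onFun, Set.disjoint_left]
  rintro x ⟨h0, h1⟩ ⟨h0', h1'⟩
  exact hne (Prod.ext (fin_eq_of_mem_Ico m _ _ _ h0 h0') (fin_eq_of_mem_Ico m _ _ _ h1 h1'))

lemma volume_coord_eq (i : Fin 2) (c : ℝ) : (volume : Measure E2) {x : E2 | x i = c} = 0 := by
  have hmp := EuclideanSpace.volume_preserving_symm_measurableEquiv_toLp (Fin 2)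
  have hs : MeasurableSet {y : Fin 2 → ℝ | y i = c} := by
    show MeasurableSet ((fun y : Fin 2 → ℝ => y i) ⁻¹' {c})
    exact (measurable_pi_apply i) (measurableSet_singleton c)
  have hpre : (MeasurableEquiv.toLp 2 (Fin 2 → ℝ)).symm ⁻¹' {y : Fin 2 → ℝ | y i = c}
      = {x : E2 | x i = c} := rfl
  have h1 := hmp.measure_preimage hs.nullMeasurableSet
  rw [hpre] at h1
  have h2 : (volume : Measure (Fin 2 → ℝ)) {y : Fin 2 → ℝ | y i = c} = 0 := by
    rw [volume_pi]
    exact Measure.pi_hyperplane (fun _ : Fin 2 => (volume : Measure ℝ)) i c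
  rw [h1, h2]

lemma unitSq_diff_null (m : ℕ) (hm : 0 < m) :
    (volume : Measure E2) (unitSq \ ⋃ k, gridSq m k) = 0 := by
  have hm' : (0:ℝ) < m := by exact_mod_cast hm
  have hsub : unitSq \ (⋃ k, gridSq m k) ⊆ {x : E2 | x 0 = 1} ∪ {x : E2 | x 1 = 1} := by
    rintro x ⟨hx, hnx⟩
    by_contra hc
    simp only [Set.mem_union, Set.mem_setOf_eq, not_or] at hc
    obtain ⟨hc0, hc1⟩ := hc
    have h0 := hx 0
    have h1 := hx 1
    have hx0 : x 0 ∈ Set.Ico (0:ℝ) 1 := ⟨h0.1, lt_of_le_of_ne h0.2 hc0⟩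
    have hx1 : x 1 ∈ Set.Ico (0:ℝ) 1 := ⟨h1.1, lt_of_le_of_ne h1.2 hc1⟩
    have mem : ∀ t : ℝ, t ∈ Set.Ico (0:ℝ) 1 → ∃ a : Fin m,
        t ∈ Set.Ico ((a : ℝ) / m) (((a : ℝ) + 1) / m) := by
      rintro t ⟨ht0, ht1⟩
      have htm : 0 ≤ t * m := by positivity
      have hlt : ⌊t * m⌋₊ < m := by
        rw [Nat.floor_lt htm]
        nlinarith
      refine ⟨⟨⌊t * m⌋₊, hlt⟩, ?_, ?_⟩
      · rw [div_le_iff₀ hm']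
        exact_mod_cast Nat.floor_le htm
      · rw [lt_div_iff₀ hm']
        exact_mod_cast Nat.lt_floor_add_one (t * m)
    obtain ⟨a, ha⟩ := mem _ hx0
    obtain ⟨b, hb⟩ := mem _ hx1
    exact hnx (Set.mem_iUnion.2 ⟨(a, b), ha, hb⟩)
  refine measure_mono_null hsub ?_
  exact measure_union_null (volume_coord_eq 0 1) (volume_coord_eq 1 1)

lemma volume_box (A B : Set ℝ) (hA : MeasurableSet A) (hB : MeasurableSet B) :
    (volume : Measure E2) {x : E2 | x 0 ∈ A ∧ x 1 ∈ B} = volume A * volume B := by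
  have hmp := EuclideanSpace.volume_preserving_symm_measurableEquiv_toLp (Fin 2)
  have hset : {y : Fin 2 → ℝ | y 0 ∈ A ∧ y 1 ∈ B}
      = Set.univ.pi (fun l : Fin 2 => if l = 0 then A else B) := by
    ext y
    simp only [Set.mem_setOf_eq, Set.mem_univ_pi, Fin.forall_fin_two]
    norm_num
  have hs : MeasurableSet {y : Fin 2 → ℝ | y 0 ∈ A ∧ y 1 ∈ B} := by
    rw [hset]
    exact MeasurableSet.univ_pi fun l => by split <;> assumption
  have hpre : (MeasurableEquiv.toLp 2 (Fin 2 → ℝ)).symm ⁻¹' {y : Fin 2 → ℝ | y 0 ∈ A ∧ y 1 ∈ B}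
      = {x : E2 | x 0 ∈ A ∧ x 1 ∈ B} := rfl
  have h1 := hmp.measure_preimage hs.nullMeasurableSet
  rw [hpre] at h1
  rw [h1, hset, volume_pi, Measure.pi_pi, Fin.prod_univ_two]
  norm_num

lemma volume_gridSq_pos (m : ℕ) (hm : 0 < m) (k : Fin m × Fin m) :
    0 < (volume : Measure E2) (gridSq m k) := by
  have hm' : (0:ℝ) < m := by exact_mod_cast hm
  have : gridSq m k = {x : E2 | x 0 ∈ Set.Ico ((k.1 : ℝ) / m) (((k.1 : ℝ) + 1) / m)
      ∧ x 1 ∈ Set.Ico ((k.2 : ℝ) / m) (((k.2 : ℝ) + 1) / m)} := rfl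
  rw [this, volume_box _ _ measurableSet_Ico measurableSet_Ico,
    Real.volume_Ico, Real.volume_Ico]
  have h : ∀ a : ℝ, (0:ENNReal) < ENNReal.ofReal ((a + 1) / m - a / m) := by
    intro a
    rw [ENNReal.ofReal_pos]
    have : (a + 1) / m - a / m = 1 / m := by field_simp; ring
    rw [this]; positivity
  exact ENNReal.mul_pos (h _).ne' (h _).ne'

lemma pi_cyl_one {α : Type*} [MeasurableSpace α] (μ : Measure α) [IsProbabilityMeasure μ]
    (N : ℕ) (i : Fin N) (s : Set α) :
    (Measure.pi fun _ : Fin N => μ) {ω : Fin N → α | ω i ∈ s} = μ s := by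
  have hset : {ω : Fin N → α | ω i ∈ s} = Set.univ.pi (fun l => if l = i then s else Set.univ) := by
    ext ω
    simp only [Set.mem_setOf_eq, Set.mem_univ_pi]
    constructor
    · intro h l
      split
      · next h' => subst h'; exact h
      · trivial
    · intro h
      have := h i
      simpa using this
  rw [hset, Measure.pi_pi]
  simp [apply_ite μ, measure_univ, Finset.prod_ite_eq']

lemma pi_cyl_two {α : Type*} [MeasurableSpace α] (μ : Measure α) [IsProbabilityMeasure μ]
    (N : ℕ) (i j : Fin N) (hij : i ≠ j) (s t : Set α) :
    (Measure.pi fun _ : Fin N => μ) {ω : Fin N → α | ω i ∈ s ∧ ω j ∈ t} = μ s * μ t := by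
  classical
  have hset : {ω : Fin N → α | ω i ∈ s ∧ ω j ∈ t}
      = Set.univ.pi (fun l => if l = i then s else if l = j then t else Set.univ) := by
    ext ω
    simp only [Set.mem_setOf_eq, Set.mem_univ_pi]
    constructor
    · rintro ⟨h1, h2⟩ l
      split
      · next h' => subst h'; exact h1
      · split
        · next h' => subst h'; exact h2
        · trivial
    · intro h
      refine ⟨?_, ?_⟩
      · have := h i; simpa using this
      · have := h j
        rw [if_neg hij.symm, if_pos rfl] at this
        exact this
  rw [hset, Measure.pi_pi]
  have hout : ∀ l ∈ Finset.univ, l ∉ ({i, j} : Finset (Fin N)) →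
      μ (if l = i then s else if l = j then t else Set.univ) = 1 := by
    intro l _ hl
    simp only [Finset.mem_insert, Finset.mem_singleton, not_or] at hl
    rw [if_neg hl.1, if_neg hl.2, measure_univ]
  rw [← Finset.prod_subset (Finset.subset_univ ({i, j} : Finset (Fin N))) hout,
    Finset.prod_pair hij]
  rw [if_pos rfl, if_neg hij.symm, if_pos rfl]

/-- For a bounded strictly positive probability density `ρ` on the unit square
and the grid of `m²` squares `Q_k` with masses `p_k = ∫_{Q_k} ρ`, the random
density `f^m = Σ_k (R_k/(p_k N)) ρ 1_{Q_k}`, built from the counts `R_k` of `N`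
i.i.d. sample points in the squares, satisfies
`E_μ[∫_Q (f^m − ρ)²] ≤ ‖ρ‖_∞ m²/N`. -/
theorem piecewise_density_L2_estimate
    (ρ : E2 → ℝ) (M : ℝ) (hbound : ∀ x ∈ unitSq, ρ x ≤ M)
    (hpos : ∀ x ∈ unitSq, 0 < ρ x)
    (hint : ∫ x in unitSq, ρ x = 1)
    (μ : Measure E2)
    (hμ : μ = (volume.restrict unitSq).withDensity fun x => ENNReal.ofReal (ρ x))
    (hprob : IsProbabilityMeasure μ)
    (m N : ℕ) (hm : 0 < m) (hN : 0 < N)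
    (p : Fin m × Fin m → ℝ) (hp : p = fun k => ∫ x in gridSq m k, ρ x) :
    ∫ ω : Fin N → E2,
        (∫ x in unitSq,
          ((∑ k : Fin m × Fin m,
              ((Finset.univ.filter fun i => ω i ∈ gridSq m k).card : ℝ) /
                  (p k * N) * (gridSq m k).indicator ρ x) - ρ x) ^ 2)
      ∂(Measure.pi fun _ => μ) ≤ M * m ^ 2 / N := by
  classical
  haveI : IsProbabilityMeasure μ := hprob
  have hm' : (0:ℝ) < m := by exact_mod_cast hm
  have hN' : (0:ℝ) < N := by exact_mod_cast hN
  have hM : 0 ≤ M := by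
    have h0 : (0:E2) ∈ unitSq := fun i => by norm_num
    exact le_of_lt (lt_of_lt_of_le (hpos _ h0) (hbound _ h0))
  have hIntOn : IntegrableOn ρ unitSq := by
    by_contra h
    rw [integral_undef h] at hint
    exact one_ne_zero hint.symm
  set S : Fin m × Fin m → Set E2 := gridSq m with hSdef
  set ν : Measure (Fin N → E2) := Measure.pi fun _ => μ with hν
  haveI : IsProbabilityMeasure ν := by rw [hν]; infer_instance
  have hSm : ∀ k, MeasurableSet (S k) := measurableSet_gridSq m
  have hSsub : ∀ k, S k ⊆ unitSq := gridSq_subset m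
  have hIk : ∀ k, IntegrableOn ρ (S k) := fun k => hIntOn.mono_set (hSsub k)
  have hnn : ∀ k, (0:E2 → ℝ) ≤ᵐ[volume.restrict (S k)] ρ := fun k =>
    (ae_restrict_iff' (hSm k)).2 (ae_of_all _ fun x hx => (hpos x (hSsub k hx)).le)
  have hμS : ∀ k, μ (S k) = ENNReal.ofReal (p k) := by
    intro k
    rw [hμ, withDensity_apply _ (hSm k), Measure.restrict_restrict (hSm k),
      Set.inter_eq_self_of_subset_left (hSsub k), hp]
    exact (ofReal_integral_eq_lintegral_ofReal (hIk k) (hnn k)).symm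
  have hp_pos : ∀ k, 0 < p k := by
    intro k
    rw [hp]
    refine (setIntegral_pos_iff_support_of_nonneg_ae (hnn k) (hIk k)).2 ?_
    refine lt_of_lt_of_le (volume_gridSq_pos m hm k) (measure_mono ?_)
    intro x hx
    exact ⟨ne_of_gt (hpos x (hSsub k hx)), hx⟩
  have hp_le : ∀ k, p k ≤ 1 := by
    intro k
    have h1 := measure_mono (μ := μ) (Set.subset_univ (S k))
    rw [hμS k, measure_univ] at h1
    exact ENNReal.ofReal_le_one.1 h1
  -- integrability of ρ² on the squares
  have hρsm : AEStronglyMeasurable ρ (volume.restrict unitSq) := hIntOn.1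
  have hsqInt : ∀ k, IntegrableOn (fun x => ρ x ^ 2) (S k) := by
    intro k
    have hsm0 : AEStronglyMeasurable ρ (volume.restrict (S k)) :=
      hρsm.mono_measure (Measure.restrict_mono (hSsub k) le_rfl)
    have hsm : AEStronglyMeasurable (fun x => ρ x ^ 2) (volume.restrict (S k)) := by
      have := hsm0.mul hsm0
      simpa [sq, Pi.mul_def] using this
    refine Integrable.mono' ((hIk k).const_mul M) hsm ?_
    refine (ae_restrict_iff' (hSm k)).2 (ae_of_all _ fun x hx => ?_)
    have h1 := (hpos x (hSsub k hx)).le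
    have h2 := hbound x (hSsub k hx)
    rw [Real.norm_eq_abs, abs_of_nonneg (by positivity)]
    nlinarith
  have hInonneg : ∀ k, 0 ≤ ∫ x in S k, ρ x ^ 2 :=
    fun k => setIntegral_nonneg (hSm k) fun x _ => sq_nonneg _
  have hIle : ∀ k, ∫ x in S k, ρ x ^ 2 ≤ M * p k := by
    intro k
    have h1 : ∫ x in S k, ρ x ^ 2 ≤ ∫ x in S k, M * ρ x :=
      setIntegral_mono_on (hsqInt k) ((hIk k).const_mul M) (hSm k)
        (fun x hx => by nlinarith [hpos x (hSsub k hx), hbound x (hSsub k hx)])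
    rw [integral_const_mul, ← congrFun hp k] at h1; exact h1
  -- the inner integral formula
  have inner_formula : ∀ a : Fin m × Fin m → ℝ,
      (∫ x in unitSq, (∑ k, a k * (S k).indicator ρ x - ρ x)^2)
        = ∑ k, (a k - 1)^2 * ∫ x in S k, ρ x ^ 2 := by
    intro a
    set U : Set E2 := ⋃ k, S k with hU
    have hUm : MeasurableSet U := MeasurableSet.iUnion hSm
    have hUsub : U ⊆ unitSq := Set.iUnion_subset hSsub
    have hae : unitSq =ᵐ[volume] U := by
      rw [MeasureTheory.ae_eq_set]
      constructor
      · exact unitSq_diff_null m hm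
      · rw [Set.diff_eq_empty.2 hUsub]; exact measure_empty
    rw [setIntegral_congr_set hae]
    have heq : Set.EqOn (fun x => (∑ k, a k * (S k).indicator ρ x - ρ x)^2)
        (fun x => ∑ k, (S k).indicator (fun y => (a k - 1)^2 * ρ y ^ 2) x) U := by
      intro x hx
      obtain ⟨k₀, hk₀⟩ := Set.mem_iUnion.1 hx
      have hsum1 : ∑ k, a k * (S k).indicator ρ x = a k₀ * ρ x := by
        rw [Finset.sum_eq_single k₀]
        · rw [Set.indicator_of_mem hk₀]
        · intro k _ hk
          rw [Set.indicator_of_notMem, mul_zero]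
          intro hxk
          exact absurd hk₀ (Set.disjoint_left.1 (gridSq_disjoint m hk) hxk)
        · intro h; exact absurd (Finset.mem_univ k₀) h
      have hsum2 : ∑ k, (S k).indicator (fun y => (a k - 1)^2 * ρ y ^ 2) x
          = (a k₀ - 1)^2 * ρ x ^ 2 := by
        rw [Finset.sum_eq_single k₀]
        · rw [Set.indicator_of_mem hk₀]
        · intro k _ hk
          rw [Set.indicator_of_notMem]
          intro hxk
          exact absurd hk₀ (Set.disjoint_left.1 (gridSq_disjoint m hk) hxk)
        · intro h; exact absurd (Finset.mem_univ k₀) h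
      simp only
      rw [hsum1, hsum2]
      ring
    rw [setIntegral_congr_fun hUm heq]
    have hIndInt : ∀ k : Fin m × Fin m,
        Integrable ((S k).indicator fun y => (a k - 1)^2 * ρ y ^ 2) (volume.restrict U) := by
      intro k
      have h1 : IntegrableOn (fun y => (a k - 1)^2 * ρ y ^ 2) (S k) (volume.restrict U) := by
        rw [IntegrableOn, Measure.restrict_restrict (hSm k),
          Set.inter_eq_self_of_subset_left (Set.subset_iUnion S k)]
        exact (hsqInt k).const_mul _
      exact h1.integrable_indicator (hSm k)
    rw [integral_finset_sum _ fun k _ => hIndInt k]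
    refine Finset.sum_congr rfl fun k _ => ?_
    rw [integral_indicator (hSm k), Measure.restrict_restrict (hSm k),
      Set.inter_eq_self_of_subset_left (Set.subset_iUnion S k), integral_const_mul]
  -- the indicator random variables
  set X : Fin m × Fin m → Fin N → (Fin N → E2) → ℝ :=
    fun k i ω => if ω i ∈ S k then 1 else 0 with hX
  have hXmeas : ∀ k i, Measurable (X k i) := fun k i =>
    Measurable.ite ((measurable_pi_apply i) (hSm k)) measurable_const measurable_const
  have hX01 : ∀ k i ω, 0 ≤ X k i ω ∧ X k i ω ≤ 1 := by
    intro k i ω; rw [hX]; dsimp only; split <;> norm_num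
  have hbddInt : ∀ (f : (Fin N → E2) → ℝ) (C : ℝ), Measurable f → (∀ ω, |f ω| ≤ C) →
      Integrable f ν := fun f C hf hC =>
    (integrable_const C).mono' hf.aestronglyMeasurable (ae_of_all _ hC)
  have hXint : ∀ k i, Integrable (X k i) ν := by
    intro k i
    refine hbddInt _ 1 (hXmeas k i) fun ω => ?_
    rw [abs_of_nonneg (hX01 k i ω).1]; exact (hX01 k i ω).2
  have hcard : ∀ (k : Fin m × Fin m) (ω : Fin N → E2),
      ((Finset.univ.filter fun i => ω i ∈ S k).card : ℝ) = ∑ i, X k i ω := by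
    intro k ω
    rw [Finset.card_filter]
    push_cast
    rw [hX]
  -- expectations
  have hEX : ∀ k i, ∫ ω, X k i ω ∂ν = p k := by
    intro k i
    have hXind : X k i = Set.indicator {ω : Fin N → E2 | ω i ∈ S k} 1 := by
      funext ω
      rw [hX]
      by_cases h : ω i ∈ S k <;> simp [h, Set.indicator_apply, Set.mem_setOf_eq]
    have hmeas : MeasurableSet {ω : Fin N → E2 | ω i ∈ S k} :=
      (measurable_pi_apply i) (hSm k)
    rw [hXind, integral_indicator_one hmeas, measureReal_def, hν, pi_cyl_one μ N i (S k), hμS k,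
      ENNReal.toReal_ofReal (hp_pos k).le]
  have hEXX : ∀ (k : Fin m × Fin m) (i j : Fin N), i ≠ j →
      ∫ ω, X k i ω * X k j ω ∂ν = p k ^ 2 := by
    intro k i j hij
    have hXind : (fun ω => X k i ω * X k j ω)
        = Set.indicator {ω : Fin N → E2 | ω i ∈ S k ∧ ω j ∈ S k} 1 := by
      funext ω
      rw [hX]
      by_cases hi : ω i ∈ S k <;> by_cases hj : ω j ∈ S k <;>
        simp [hi, hj, Set.indicator_apply, Set.mem_setOf_eq]
    have hmeas : MeasurableSet {ω : Fin N → E2 | ω i ∈ S k ∧ ω j ∈ S k} := by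
      have : {ω : Fin N → E2 | ω i ∈ S k ∧ ω j ∈ S k}
          = ((fun ω : Fin N → E2 => ω i) ⁻¹' S k) ∩ ((fun ω : Fin N → E2 => ω j) ⁻¹' S k) := rfl
      rw [this]
      exact ((measurable_pi_apply i) (hSm k)).inter ((measurable_pi_apply j) (hSm k))
    rw [hXind, integral_indicator_one hmeas, measureReal_def, hν, pi_cyl_two μ N i j hij (S k) (S k), hμS k,
      ENNReal.toReal_mul, ENNReal.toReal_ofReal (hp_pos k).le, sq]
  have hXsq : ∀ k i (ω : Fin N → E2), X k i ω * X k i ω = X k i ω := by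
    intro k i ω; rw [hX]; dsimp only; split <;> norm_num
  -- covariance terms
  have hCov : ∀ (k : Fin m × Fin m) (i j : Fin N),
      ∫ ω, (X k i ω - p k) * (X k j ω - p k) ∂ν
        = if i = j then p k - p k ^ 2 else 0 := by
    intro k i j
    have hXXint : Integrable (fun ω => X k i ω * X k j ω) ν := by
      refine hbddInt _ 1 ((hXmeas k i).mul (hXmeas k j)) fun ω => ?_
      rw [abs_mul, abs_of_nonneg (hX01 k i ω).1, abs_of_nonneg (hX01 k j ω).1]
      calc X k i ω * X k j ω ≤ 1 * 1 := by
            exact mul_le_mul (hX01 k i ω).2 (hX01 k j ω).2 (hX01 k j ω).1 zero_le_one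
        _ = 1 := one_mul 1
    have hexp : (fun ω => (X k i ω - p k) * (X k j ω - p k))
        = fun ω => (X k i ω * X k j ω + p k * p k) - (p k * X k i ω + p k * X k j ω) := by
      funext ω; ring
    have hint1 : Integrable (fun ω => X k i ω * X k j ω + p k * p k) ν :=
      hXXint.add (integrable_const _)
    have hint2 : Integrable (fun ω => p k * X k i ω + p k * X k j ω) ν :=
      ((hXint k i).const_mul _).add ((hXint k j).const_mul _)
    rw [hexp, integral_sub hint1 hint2,
      integral_add hXXint (integrable_const _),
      integral_add ((hXint k i).const_mul _) ((hXint k j).const_mul _),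
      integral_const, integral_const_mul, integral_const_mul, hEX, hEX]
    by_cases hij : i = j
    · subst hij
      rw [if_pos rfl]
      have : ∫ ω, X k i ω * X k i ω ∂ν = p k := by
        have : (fun ω => X k i ω * X k i ω) = X k i := funext fun ω => hXsq k i ω
        rw [this, hEX]
      rw [this]
      simp
      ring
    · rw [if_neg hij, hEXX k i j hij]
      simp
      ring
  -- the variance bound
  have hVar : ∀ k, ∫ ω, (∑ i, X k i ω - N * p k)^2 ∂ν = N * (p k - p k ^ 2) := by
    intro k
    have hYint : ∀ i j : Fin N, Integrable (fun ω => (X k i ω - p k) * (X k j ω - p k)) ν := by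
      intro i j
      refine hbddInt _ ((1 + p k) * (1 + p k))
        (((hXmeas k i).sub measurable_const).mul ((hXmeas k j).sub measurable_const))
        fun ω => ?_
      rw [abs_mul]
      have hb : ∀ l : Fin N, |X k l ω - p k| ≤ 1 + p k := by
        intro l
        rw [abs_le]
        constructor
        · have := (hX01 k l ω).1; nlinarith [hp_pos k]
        · have := (hX01 k l ω).2; nlinarith [hp_pos k]
      exact mul_le_mul (hb i) (hb j) (abs_nonneg _) (by nlinarith [hp_pos k])
    have hrw : ∀ ω : Fin N → E2, (∑ i, X k i ω - N * p k)^2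
        = ∑ i, ∑ j, (X k i ω - p k) * (X k j ω - p k) := by
      intro ω
      have h1 : ∑ i, X k i ω - N * p k = ∑ i : Fin N, (X k i ω - p k) := by
        rw [Finset.sum_sub_distrib, Finset.sum_const, Finset.card_univ, Fintype.card_fin,
          nsmul_eq_mul]
      rw [h1, sq, Finset.sum_mul_sum]
    simp_rw [hrw]
    rw [integral_finset_sum _ fun i _ => integrable_finset_sum _ fun j _ => hYint i j]
    have h2 : ∀ i : Fin N, ∫ ω, ∑ j, (X k i ω - p k) * (X k j ω - p k) ∂ν
        = p k - p k ^ 2 := by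
      intro i
      rw [integral_finset_sum _ fun j _ => hYint i j]
      have : ∀ j : Fin N, ∫ ω, (X k i ω - p k) * (X k j ω - p k) ∂ν
          = if i = j then p k - p k ^ 2 else 0 := fun j => hCov k i j
      rw [Finset.sum_congr rfl fun j _ => this j, Finset.sum_ite_eq]
      simp
    rw [Finset.sum_congr rfl fun i _ => h2 i, Finset.sum_const, Finset.card_univ,
      Fintype.card_fin, nsmul_eq_mul]
  -- expectation of the squared relative deviation
  have hck : ∀ k, ∫ ω, ((∑ i, X k i ω) / (p k * N) - 1)^2 ∂ν ≤ 1 / (p k * N) := by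
    intro k
    have hpN : (0:ℝ) < p k * N := mul_pos (hp_pos k) hN'
    have hrw : ∀ ω : Fin N → E2, ((∑ i, X k i ω) / (p k * N) - 1)^2
        = (∑ i, X k i ω - N * p k)^2 / (p k * N)^2 := by
      intro ω
      rw [div_sub_one hpN.ne', div_pow]
      ring_nf
    simp_rw [hrw]
    rw [integral_div, hVar k]
    rw [div_le_div_iff₀ (by positivity) hpN]
    have h1 := hp_pos k
    have h2 := hp_le k
    nlinarith [sq_nonneg (p k * N)]
  -- rewrite the goal using the inner formula
  have hrwgoal : ∀ ω : Fin N → E2,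
      (∫ x in unitSq,
          ((∑ k : Fin m × Fin m,
              ((Finset.univ.filter fun i => ω i ∈ S k).card : ℝ) /
                  (p k * N) * (S k).indicator ρ x) - ρ x) ^ 2)
        = ∑ k : Fin m × Fin m,
            ((∑ i, X k i ω) / (p k * N) - 1)^2 * ∫ x in S k, ρ x ^ 2 := by
    intro ω
    rw [inner_formula fun k => ((Finset.univ.filter fun i => ω i ∈ S k).card : ℝ) / (p k * N)]
    exact Finset.sum_congr rfl fun k _ => by rw [hcard]
  simp only [hrwgoal]
  -- integrability of the summands
  have hterm_int : ∀ k : Fin m × Fin m, Integrable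
      (fun ω => ((∑ i, X k i ω) / (p k * N) - 1)^2 * ∫ x in S k, ρ x ^ 2) ν := by
    intro k
    have hpN : (0:ℝ) < p k * N := mul_pos (hp_pos k) hN'
    have hsum_meas : Measurable fun ω : Fin N → E2 => ∑ i, X k i ω :=
      Finset.measurable_sum Finset.univ fun i _ => hXmeas k i
    have hmeas : Measurable fun ω : Fin N → E2 =>
        ((∑ i, X k i ω) / (p k * N) - 1)^2 * ∫ x in S k, ρ x ^ 2 :=
      (((hsum_meas.div_const _).sub measurable_const).pow_const 2).mul_const _
    refine hbddInt _ ((1 / p k + 1)^2 * ∫ x in S k, ρ x ^ 2) hmeas fun ω => ?_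
    have hc0 : 0 ≤ (∑ i, X k i ω) / (p k * N) := by
      refine div_nonneg ?_ hpN.le
      exact Finset.sum_nonneg fun i _ => (hX01 k i ω).1
    have hc1 : (∑ i, X k i ω) / (p k * N) ≤ 1 / p k := by
      rw [div_le_div_iff₀ hpN (hp_pos k)]
      have hs : ∑ i, X k i ω ≤ (N:ℝ) := by
        calc ∑ i, X k i ω ≤ ∑ _i : Fin N, (1:ℝ) :=
              Finset.sum_le_sum fun i _ => (hX01 k i ω).2
          _ = N := by simp
      nlinarith [hp_pos k]
    have hsq : ((∑ i, X k i ω) / (p k * N) - 1)^2 ≤ (1 / p k + 1)^2 := by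
      have h1p : (0:ℝ) < 1 / p k := by have := hp_pos k; positivity
      nlinarith
    rw [abs_of_nonneg (mul_nonneg (sq_nonneg _) (hInonneg k))]
    exact mul_le_mul_of_nonneg_right hsq (hInonneg k)
  rw [integral_finset_sum _ fun k _ => hterm_int k]
  have hfin : ∀ k : Fin m × Fin m,
      ∫ ω, ((∑ i, X k i ω) / (p k * N) - 1)^2 * (∫ x in S k, ρ x ^ 2) ∂ν ≤ M / N := by
    intro k
    have hpk := (hp_pos k).ne'
    have hNne := hN'.ne'
    rw [integral_mul_const]
    calc (∫ ω, ((∑ i, X k i ω) / (p k * N) - 1)^2 ∂ν) * ∫ x in S k, ρ x ^ 2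
        ≤ (1 / (p k * N)) * (M * p k) := by
          refine mul_le_mul (hck k) (hIle k) (hInonneg k) (by have := hp_pos k; positivity)
      _ = M / N := by field_simp
  refine le_trans (Finset.sum_le_sum fun k _ => hfin k) (le_of_eq ?_)
  rw [Finset.sum_const, Finset.card_univ, Fintype.card_prod, Fintype.card_fin,
    nsmul_eq_mul]
  push_cast
  ring
end
end
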